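/- Let ρ > 0, let N ≥ 1 be an integer, let θ, η : {1,…,N} → ℝ with θ_i > 0 and η_j > 0 for all i, j, and set η̄ = (1/N) ∑_{j=1}^N η_j. For each i define the tax rate τ_i = (η̄ − η_i/N)/ρ. Then τ_i ≥ 0 and 1 / ( τ_i + (1 + θ_i + η_i/N)/ρ ) = ρ / (1 + θ_i + η̄); that is, the tax-distorted closed-loop consumption rate α_i^{CL}(τ_i) coincides with the social planner rate α_i^{SP}. -/
import Mathlib


open Finset

/-- Pigouvian tax: with `τ_i = (η̄ − η_i/N)/ρ`, the tax is nonnegative and the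
tax-distorted closed-loop rate `1/(τ_i + (1+θ_i+η_i/N)/ρ)` coincides with the
social planner rate `ρ/(1+θ_i+η̄)`. -/
theorem stmt_12 (ρ : ℝ) (hρ : 0 < ρ) (N : ℕ) (hN : 1 ≤ N)
    (θ η : Fin N → ℝ) (hθ : ∀ i, 0 < θ i) (hη : ∀ j, 0 < η j) :
    ∀ i : Fin N,
      0 ≤ ((1 / N : ℝ) * ∑ j, η j - η i / N) / ρ ∧
      1 / (((1 / N : ℝ) * ∑ j, η j - η i / N) / ρ + (1 + θ i + η i / N) / ρ)
        = ρ / (1 + θ i + (1 / N : ℝ) * ∑ j, η j) := by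
  intro i
  have hNpos : (0 : ℝ) < N := by exact_mod_cast Nat.lt_of_lt_of_le Nat.zero_lt_one hN
  have hle : η i ≤ ∑ j, η j :=
    Finset.single_le_sum (fun j _ => (hη j).le) (Finset.mem_univ i)
  have htau : (0 : ℝ) ≤ ((1 / N : ℝ) * ∑ j, η j - η i / N) :=
    by
      have : η i / N ≤ (∑ j, η j) / N := div_le_div_of_nonneg_right hle hNpos.le
      rw [one_div, inv_mul_eq_div]
      linarith
  have hbar : (0 : ℝ) < (1 / N : ℝ) * ∑ j, η j := by
    have : (0 : ℝ) < ∑ j, η j := lt_of_lt_of_le (hη i) hle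
    positivity
  have hden : (0 : ℝ) < 1 + θ i + (1 / N : ℝ) * ∑ j, η j := by
    have := hθ i; linarith
  refine ⟨div_nonneg htau hρ.le, ?_⟩
  have hkey : ((1 / N : ℝ) * ∑ j, η j - η i / N) / ρ + (1 + θ i + η i / N) / ρ
      = (1 + θ i + (1 / N : ℝ) * ∑ j, η j) / ρ := by
    field_simp
    ring
  rw [hkey, one_div_div]
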